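/- Let x ∈ ℝ² with |x| < 1. Then ∫_{{y ∈ ℝ² : |y| < 1}} (1/(π|x−y|)) · (1/π)(1−|y|²)^{-1/2} dy = 1. That is, the function μ*(y) = (1/π)(1−|y|²)^{-1/2} on the open unit disk satisfies L[μ*] = 1 on the unit disk, where L[μ](x) = ∫ μ(y)/(π|x−y|) dy is the Riesz potential. -/

import Mathlib

open MeasureTheory

open Set
open scoped Real ENNReal

noncomputable section

namespace Stmt4Aux

theorem lintegral_comp_polarCoord_symm_real (f : ℝ × ℝ → ℝ≥0∞) :
    (∫⁻ p in polarCoord.target, ENNReal.ofReal p.1 * f (polarCoord.symm p)) = ∫⁻ p, f p := by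
  set B : ℝ × ℝ → ℝ × ℝ →L[ℝ] ℝ × ℝ := fun p =>
    LinearMap.toContinuousLinearMap (Matrix.toLin (Module.Basis.finTwoProd ℝ) (Module.Basis.finTwoProd ℝ)
      !![Real.cos p.2, -p.1 * Real.sin p.2; Real.sin p.2, p.1 * Real.cos p.2]) with hB
  have B_det : ∀ p, (B p).det = p.1 := by
    intro p
    conv_rhs => rw [← one_mul p.1, ← Real.cos_sq_add_sin_sq p.2]
    simp only [hB, neg_mul, LinearMap.det_toContinuousLinearMap, LinearMap.det_toLin,
      Matrix.det_fin_two_of, sub_neg_eq_add]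
    ring
  symm
  calc ∫⁻ p, f p = ∫⁻ p in polarCoord.source, f p := by
        rw [← setLIntegral_univ]
        exact (setLIntegral_congr polarCoord_source_ae_eq_univ).symm
    _ = ∫⁻ p in polarCoord.symm '' polarCoord.target, f p := by
        rw [OpenPartialHomeomorph.symm_image_target_eq_source]
    _ = ∫⁻ p in polarCoord.target, ENNReal.ofReal |(B p).det| * f (polarCoord.symm p) := by
        apply lintegral_image_eq_lintegral_abs_det_fderiv_mul volume
          polarCoord.open_target.measurableSet
          (fun p _ => (hasFDerivAt_polarCoord_symm p).hasFDerivWithinAt)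
          polarCoord.symm.injOn f
    _ = ∫⁻ p in polarCoord.target, ENNReal.ofReal p.1 * f (polarCoord.symm p) := by
        refine setLIntegral_congr_fun_ae polarCoord.open_target.measurableSet
          (Filter.Eventually.of_forall fun p hp => ?_)
        rw [B_det, abs_of_pos hp.1]

theorem lintegral_comp_polarCoord_symmC (f : ℂ → ℝ≥0∞) :
    (∫⁻ p in polarCoord.target, ENNReal.ofReal p.1 * f (Complex.polarCoord.symm p)) = ∫⁻ z, f z := by
  rw [← (Complex.volume_preserving_equiv_real_prod.symm).lintegral_comp_emb
    Complex.measurableEquivRealProd.symm.measurableEmbedding, ← lintegral_comp_polarCoord_symm_real]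
  rfl

lemma sqrt_factor {s b r : ℝ} (hs : 0 < s) :
    Real.sqrt (s^2 - (r+b)^2) = s * Real.sqrt (1 - ((r+b)/s)^2) := by
  rw [show s^2 - (r+b)^2 = s^2 * (1 - ((r+b)/s)^2) by field_simp,
      Real.sqrt_mul (sq_nonneg s), Real.sqrt_sq hs.le]

lemma hasDerivAt_H {s b : ℝ} (hs : 0 < s) {r : ℝ} (h1 : -1 < (r+b)/s) (h2 : (r+b)/s < 1) :
    HasDerivAt (fun r => Real.arcsin ((r+b)/s)) (1 / Real.sqrt (s^2 - (r+b)^2)) r := by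
  have h := (Real.hasDerivAt_arcsin (ne_of_gt h1) (ne_of_lt h2)).comp r
    (((hasDerivAt_id r).add_const b).div_const s)
  refine h.congr_deriv ?_
  rw [sqrt_factor hs]
  simp only [one_div, mul_inv]
  ring

lemma intervalIntegrable_f {s b : ℝ} (hb : |b| < s) :
    IntervalIntegrable (fun r => 1 / Real.sqrt (s^2 - (r+b)^2)) volume 0 (s - b) := by
  have hs : 0 < s := (abs_nonneg b).trans_lt hb
  have habs := abs_lt.mp hb
  have hsb : 0 < s - b := by linarith
  have hsb' : 0 < s + b := by linarith
  have hg : IntervalIntegrable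
      (fun r => (s+b) ^ (-(1/2) : ℝ) * (s - b - r) ^ (-(1/2):ℝ)) volume 0 (s-b) := by
    have h0 : IntervalIntegrable (fun y : ℝ => y ^ (-(1/2):ℝ)) volume 0 (s-b) :=
      intervalIntegral.intervalIntegrable_rpow' (by norm_num)
    have h1 := (h0.comp_sub_left (s-b))
    simp only [sub_zero, sub_self] at h1
    exact (h1.symm.const_mul _)
  refine hg.mono_fun ?_ ?_
  · refine ((measurable_const.div ?_).aestronglyMeasurable)
    exact Real.continuous_sqrt.measurable.comp (by fun_prop)
  · rw [Filter.EventuallyLE, ae_restrict_iff' measurableSet_uIoc]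
    refine Filter.Eventually.of_forall fun r hr => ?_
    rw [uIoc_of_le hsb.le] at hr
    obtain ⟨hr0, hr1⟩ := hr
    have hb1 : (0:ℝ) ≤ s - b - r := by linarith
    have e1 : (s+b) ^ (-(1/2) : ℝ) = (Real.sqrt (s+b))⁻¹ := by
      rw [Real.rpow_neg hsb'.le, ← Real.sqrt_eq_rpow]
    have e2 : (s-b-r) ^ (-(1/2) : ℝ) = (Real.sqrt (s-b-r))⁻¹ := by
      rw [Real.rpow_neg hb1, ← Real.sqrt_eq_rpow]
    have hfnn : (0:ℝ) ≤ 1 / Real.sqrt (s^2 - (r+b)^2) := by positivity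
    have hgnn : (0:ℝ) ≤ (s+b) ^ (-(1/2) : ℝ) * (s-b-r) ^ (-(1/2):ℝ) :=
      mul_nonneg (Real.rpow_nonneg hsb'.le _) (Real.rpow_nonneg hb1 _)
    rw [Real.norm_eq_abs, Real.norm_eq_abs, abs_of_nonneg hfnn, abs_of_nonneg hgnn, e1, e2,
      ← mul_inv, ← Real.sqrt_mul hsb'.le, one_div]
    rcases eq_or_lt_of_le hr1 with heq | hlt
    · have h0 : s^2 - (r+b)^2 = 0 := by rw [heq]; ring
      rw [h0, Real.sqrt_zero, inv_zero]
      positivity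
    · apply inv_anti₀
      · apply Real.sqrt_pos.mpr
        nlinarith
      · apply Real.sqrt_le_sqrt
        nlinarith

lemma integral_f {s b : ℝ} (hb : |b| < s) :
    ∫ r in (0:ℝ)..(s-b), 1 / Real.sqrt (s^2 - (r+b)^2)
      = π/2 - Real.arcsin (b/s) := by
  have hs : 0 < s := (abs_nonneg b).trans_lt hb
  have habs := abs_lt.mp hb
  have hsb : 0 < s - b := by linarith
  have hcont : ContinuousOn (fun r => Real.arcsin ((r+b)/s)) (Icc 0 (s-b)) :=
    (Real.continuous_arcsin.comp (by fun_prop)).continuousOn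
  have hderiv : ∀ r ∈ Ioo 0 (s-b),
      HasDerivWithinAt (fun r => Real.arcsin ((r+b)/s))
        (1 / Real.sqrt (s^2 - (r+b)^2)) (Ioi r) r := by
    intro r hr
    refine (hasDerivAt_H hs ?_ ?_).hasDerivWithinAt
    · rw [lt_div_iff₀ hs]
      linarith [habs.1, hr.1]
    · rw [div_lt_one hs]; linarith [hr.2]
  rw [intervalIntegral.integral_eq_sub_of_hasDeriv_right_of_le hsb.le hcont hderiv
    (intervalIntegrable_f hb)]
  rw [show s - b + b = s by ring, div_self hs.ne', Real.arcsin_one, zero_add]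

lemma abs_lt_sqrt {b c : ℝ} (hc : 0 < c) : |b| < Real.sqrt (b^2 + c) := by
  rw [← Real.sqrt_sq_eq_abs]
  exact Real.sqrt_lt_sqrt (sq_nonneg b) (by linarith)


lemma lintegral_aux (b c : ℝ) (hc : 0 < c) :
    ∫⁻ r in Ioo (0:ℝ) (Real.sqrt (b^2+c) - b),
        ENNReal.ofReal ((1/π^2) * (1 / Real.sqrt (b^2 + c - (r+b)^2)))
      = ENNReal.ofReal ((1/π^2) * (π/2 - Real.arcsin (b / Real.sqrt (b^2+c)))) := by
  set s := Real.sqrt (b^2+c) with hsdef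
  have hb : |b| < s := abs_lt_sqrt hc
  have hs2 : s^2 = b^2 + c := Real.sq_sqrt (by positivity)
  have hsb : 0 < s - b := by have := (abs_lt.mp hb).2; linarith
  simp only [← hs2]
  have hint : IntegrableOn (fun r => (1/π^2) * (1 / Real.sqrt (s^2 - (r+b)^2)))
      (Ioo (0:ℝ) (s-b)) volume := by
    have h := ((intervalIntegrable_f hb).const_mul (1/π^2))
    rw [intervalIntegrable_iff, uIoc_of_le hsb.le] at h
    exact h.mono_set Ioo_subset_Ioc_self
  rw [← ofReal_integral_eq_lintegral_ofReal hint
    (Filter.Eventually.of_forall fun r => by positivity)]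
  congr 1
  rw [← integral_Ioc_eq_integral_Ioo, ← intervalIntegral.integral_of_le hsb.le,
    intervalIntegral.integral_const_mul, integral_f hb]

lemma theta_integral (px py c : ℝ) (hc : 0 < c) :
    ∫ θ in (-π)..π, (1/π^2) * (π/2 - Real.arcsin ((px * Real.cos θ + py * Real.sin θ)
      / Real.sqrt ((px * Real.cos θ + py * Real.sin θ)^2 + c))) = 1 := by
  set B : ℝ → ℝ := fun θ => px * Real.cos θ + py * Real.sin θ with hB
  set A : ℝ → ℝ := fun θ => Real.arcsin (B θ / Real.sqrt ((B θ)^2 + c)) with hA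
  have hBcont : Continuous B := by fun_prop
  have hAcont : Continuous A := by
    apply Real.continuous_arcsin.comp
    apply hBcont.div (by fun_prop)
    intro θ
    exact (Real.sqrt_pos.mpr (by positivity)).ne'
  have hkey : ∀ θ, A (θ - π) = - A θ := by
    intro θ
    have hBneg : B (θ - π) = - B θ := by
      simp only [hB, Real.cos_sub, Real.sin_sub, Real.cos_pi, Real.sin_pi]
      ring
    simp only [hA, hBneg, neg_sq, neg_div, Real.arcsin_neg]
  have hA0 : ∫ θ in (-π)..π, A θ = 0 := by
    have h1 : ∫ θ in (0:ℝ)..π, A (θ - π) = ∫ θ in (-π)..(0:ℝ), A θ := by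
      have := intervalIntegral.integral_comp_sub_right (a := (0:ℝ)) (b := π) A π
      simpa using this
    have h2 : ∫ θ in (0:ℝ)..π, A (θ - π) = - ∫ θ in (0:ℝ)..π, A θ := by
      simp only [hkey, intervalIntegral.integral_neg]
    have h3 := intervalIntegral.integral_add_adjacent_intervals
      (a := -π) (b := 0) (c := π)
      (hAcont.intervalIntegrable (μ := volume) _ _) (hAcont.intervalIntegrable _ _)
    linarith [h3]
  have h4 : ∫ θ in (-π)..π, (π/2 - A θ) = π^2 := by
    rw [intervalIntegral.integral_sub (intervalIntegrable_const)
      (hAcont.intervalIntegrable (μ := volume) _ _), hA0, intervalIntegral.integral_const]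
    simp only [sub_neg_eq_add, smul_eq_mul, sub_zero]
    ring
  calc ∫ θ in (-π)..π, (1/π^2) * (π/2 - A θ)
      = (1/π^2) * ∫ θ in (-π)..π, (π/2 - A θ) := intervalIntegral.integral_const_mul _ _
    _ = 1 := by rw [h4]; field_simp

lemma norm_sq_complex (z : ℂ) : ‖z‖^2 = z.re^2 + z.im^2 := by
  rw [Complex.sq_norm, Complex.normSq_apply]; ring

lemma complex_key (x : ℂ) (hx : ‖x‖ < 1) :
    ∫⁻ z in Metric.ball (0:ℂ) 1,
      ENNReal.ofReal ((1 / (π * ‖x - z‖)) * (1 / (π * Real.sqrt (1 - ‖z‖^2)))) = 1 := by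
  set c : ℝ := 1 - ‖x‖^2 with hcdef
  have hc : 0 < c := by nlinarith [norm_nonneg x]
  set v : ℂ → ℝ≥0∞ := fun w =>
    ENNReal.ofReal ((1 / (π * ‖w‖)) * (1 / (π * Real.sqrt (1 - ‖x + w‖^2)))) with hv
  set g : ℂ → ℝ≥0∞ := fun w => ((x + ·)⁻¹' Metric.ball 0 1).indicator v w with hg
  have hpre_meas : MeasurableSet ((x + ·)⁻¹' Metric.ball (0:ℂ) 1) :=
    (Metric.isOpen_ball.preimage (by fun_prop)).measurableSet
  -- Step 1 : translation
  have step1 : ∫⁻ z in Metric.ball (0:ℂ) 1,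
      ENNReal.ofReal ((1 / (π * ‖x - z‖)) * (1 / (π * Real.sqrt (1 - ‖z‖^2)))) = ∫⁻ w, g w := by
    rw [← (measurePreserving_add_left volume x).setLIntegral_comp_preimage_emb
      (measurableEmbedding_addLeft x) _ (Metric.ball 0 1)]
    rw [← lintegral_indicator hpre_meas]
    refine lintegral_congr fun w => ?_
    by_cases hw : w ∈ (x + ·)⁻¹' Metric.ball (0:ℂ) 1
    · simp only [hg, hv, indicator_of_mem hw]
      rw [show x - (x + w) = -w from by ring, norm_neg]
    · simp only [hg, indicator_of_notMem hw]
  rw [step1, ← lintegral_comp_polarCoord_symmC g]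
  -- Step 2 : Tonelli
  have hsymm_meas : Measurable (fun p : ℝ × ℝ => Complex.polarCoord.symm p) := by
    have : (fun p : ℝ × ℝ => Complex.polarCoord.symm p)
        = fun p : ℝ × ℝ => (p.1 : ℂ) * (Real.cos p.2 + Real.sin p.2 * Complex.I) :=
      funext fun p => Complex.polarCoord_symm_apply p
    rw [this]; fun_prop
  have hv_meas : Measurable v := by
    apply ENNReal.measurable_ofReal.comp
    apply Measurable.mul
    · exact measurable_const.div (measurable_const.mul measurable_norm)
    · refine measurable_const.div (measurable_const.mul
        (Real.continuous_sqrt.measurable.comp (measurable_const.sub ?_)))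
      exact ((measurable_const.add measurable_id).norm).pow_const 2
  have hg_meas : Measurable g := hv_meas.indicator hpre_meas
  have hF_meas : Measurable (fun p : ℝ × ℝ =>
      ENNReal.ofReal p.1 * g (Complex.polarCoord.symm p)) :=
    (ENNReal.measurable_ofReal.comp measurable_fst).mul (hg_meas.comp hsymm_meas)
  have hTarget : polarCoord.target = Ioi (0:ℝ) ×ˢ Ioo (-π) π := rfl
  rw [hTarget]
  have hprod : (volume : Measure (ℝ × ℝ)).restrict (Ioi (0:ℝ) ×ˢ Ioo (-π) π)
      = (volume.restrict (Ioi (0:ℝ))).prod (volume.restrict (Ioo (-π) π)) := by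
    rw [Measure.volume_eq_prod, Measure.prod_restrict]
  rw [hprod, lintegral_prod_symm _ hF_meas.aemeasurable]
  -- Step 3 : inner integral
  have inner : ∀ θ : ℝ, ∫⁻ r in Ioi (0:ℝ),
      ENNReal.ofReal r * g (Complex.polarCoord.symm (r, θ))
      = ENNReal.ofReal ((1/π^2) * (π/2 - Real.arcsin ((x.re * Real.cos θ + x.im * Real.sin θ)
          / Real.sqrt ((x.re * Real.cos θ + x.im * Real.sin θ)^2 + c))) ) := by
    intro θ
    set b : ℝ := x.re * Real.cos θ + x.im * Real.sin θ with hbdef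
    set s : ℝ := Real.sqrt (b^2 + c) with hsdef
    have hbs : |b| < s := abs_lt_sqrt hc
    have hs0 : 0 < s := (abs_nonneg b).trans_lt hbs
    have hs2 : s^2 = b^2 + c := Real.sq_sqrt (by positivity)
    have habs := abs_lt.mp hbs
    -- key quadratic identity
    have hnormsq : ∀ r : ℝ, ‖x + Complex.polarCoord.symm (r, θ)‖^2 - 1
        = (r+b)^2 - (b^2 + c) := by
      intro r
      rw [Complex.polarCoord_symm_apply, norm_sq_complex]
      have h1 : Real.sin θ ^ 2 + Real.cos θ ^ 2 = 1 := Real.sin_sq_add_cos_sq θ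
      have hx2 : ‖x‖^2 = x.re^2 + x.im^2 := norm_sq_complex x
      simp only [Complex.add_re, Complex.add_im, Complex.mul_re, Complex.mul_im,
        Complex.ofReal_re, Complex.ofReal_im, Complex.I_re, Complex.I_im,
        Complex.add_re, Complex.add_im, Complex.ofReal_re, Complex.ofReal_im]
      rw [hcdef, hx2, hbdef]
      ring_nf
      nlinarith [h1]
    have hmem : ∀ r : ℝ, (x + Complex.polarCoord.symm (r, θ) ∈ Metric.ball (0:ℂ) 1)
        ↔ (r+b)^2 < b^2 + c := by
      intro r
      rw [Metric.mem_ball, dist_zero_right]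
      constructor
      · intro h
        have h2 : ‖x + Complex.polarCoord.symm (r, θ)‖^2 < 1 := by
          nlinarith [norm_nonneg (x + Complex.polarCoord.symm (r, θ))]
        linarith [hnormsq r]
      · intro h
        have h2 : ‖x + Complex.polarCoord.symm (r, θ)‖^2 < 1 := by linarith [hnormsq r]
        nlinarith [norm_nonneg (x + Complex.polarCoord.symm (r, θ))]
    have hindic : ∀ r ∈ Ioi (0:ℝ), ENNReal.ofReal r * g (Complex.polarCoord.symm (r, θ))
        = (Ioo (0:ℝ) (s - b)).indicator
            (fun r => ENNReal.ofReal ((1/π^2) * (1 / Real.sqrt (b^2 + c - (r+b)^2)))) r := by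
      intro r hr
      have hr0 : 0 < r := hr
      by_cases hm : (r+b)^2 < b^2 + c
      · have hrs : r < s - b := by nlinarith [hs2]
        have hmem' : Complex.polarCoord.symm (r, θ) ∈ (x + ·)⁻¹' Metric.ball (0:ℂ) 1 := by
          rw [mem_preimage]; exact (hmem r).mpr hm
        simp only [hg, hv, indicator_of_mem hmem',
          indicator_of_mem (show r ∈ Ioo (0:ℝ) (s-b) from ⟨hr0, hrs⟩)]
        have hnorm_r : ‖Complex.polarCoord.symm (r, θ)‖ = r := by
          rw [Complex.norm_polarCoord_symm, abs_of_pos hr0]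
        have hD : 1 - ‖x + Complex.polarCoord.symm (r, θ)‖^2 = b^2 + c - (r+b)^2 := by
          linarith [hnormsq r]
        rw [hnorm_r, hD, ← ENNReal.ofReal_mul hr0.le]
        congr 1
        have hDpos : 0 < Real.sqrt (b^2 + c - (r+b)^2) := Real.sqrt_pos.mpr (by linarith)
        field_simp
      · have hrs : ¬ (r ∈ Ioo (0:ℝ) (s - b)) := by
          rintro ⟨h1, h2⟩
          apply hm
          have hub : r + b < s := by linarith
          have hlb : -s < r + b := by linarith
          nlinarith [hs2]
        have hmem' : Complex.polarCoord.symm (r, θ) ∉ (x + ·)⁻¹' Metric.ball (0:ℂ) 1 := by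
          rw [mem_preimage]
          exact fun h => hm ((hmem r).mp h)
        simp only [hg, indicator_of_notMem hmem', indicator_of_notMem hrs, mul_zero]
    rw [setLIntegral_congr_fun_ae measurableSet_Ioi (Filter.Eventually.of_forall hindic)]
    rw [lintegral_indicator measurableSet_Ioo, Measure.restrict_restrict measurableSet_Ioo,
      inter_eq_left.mpr (fun r hr => hr.1)]
    exact lintegral_aux b c hc
  rw [lintegral_congr inner]
  -- Step 4 : outer integral
  set h : ℝ → ℝ := fun θ => (1/π^2) * (π/2 - Real.arcsin ((x.re * Real.cos θ + x.im * Real.sin θ)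
      / Real.sqrt ((x.re * Real.cos θ + x.im * Real.sin θ)^2 + c))) with hh
  have hh_cont : Continuous h := by
    apply continuous_const.mul
    apply continuous_const.sub
    apply Real.continuous_arcsin.comp
    apply Continuous.div (by fun_prop) (by fun_prop)
    intro θ
    exact (Real.sqrt_pos.mpr (by positivity)).ne'
  have hh_nn : ∀ θ, 0 ≤ h θ := by
    intro θ
    have := Real.arcsin_le_pi_div_two ((x.re * Real.cos θ + x.im * Real.sin θ)
      / Real.sqrt ((x.re * Real.cos θ + x.im * Real.sin θ)^2 + c))
    have hπ : (0:ℝ) < π^2 := by positivity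
    apply mul_nonneg (by positivity) (by linarith)
  have hint : IntegrableOn h (Ioo (-π) π) volume :=
    (hh_cont.integrableOn_Icc).mono_set Ioo_subset_Icc_self
  rw [← ofReal_integral_eq_lintegral_ofReal hint (Filter.Eventually.of_forall fun θ => hh_nn θ)]
  rw [← integral_Ioc_eq_integral_Ioo,
    ← intervalIntegral.integral_of_le (by linarith [Real.pi_pos] : -π ≤ π)]
  rw [hh]
  rw [theta_integral x.re x.im c hc, ENNReal.ofReal_one]

end Stmt4Aux

end

/-- The equilibrium density `μ*(y) = (1/π)(1−|y|²)^{-1/2}` of the unit disk `Λ ⊂ ℝ²`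
satisfies `L[μ*](x) = ∫_Λ μ*(y)/(π|x−y|) dy = 1` for every `x` in the open unit disk,
i.e. `μ* = L⁻¹[1]` for the Riesz potential `L`. -/
theorem stmt4 (x : EuclideanSpace ℝ (Fin 2)) (hx : ‖x‖ < 1) :
    ∫ y in Metric.ball (0 : EuclideanSpace ℝ (Fin 2)) 1,
      (1 / (Real.pi * ‖x - y‖)) * (1 / (Real.pi * Real.sqrt (1 - ‖y‖ ^ 2))) = 1 := by
  have hnn : (fun _ => (0:ℝ)) ≤ᵐ[volume.restrict (Metric.ball (0 : EuclideanSpace ℝ (Fin 2)) 1)]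
      fun y => (1 / (Real.pi * ‖x - y‖)) * (1 / (Real.pi * Real.sqrt (1 - ‖y‖ ^ 2))) :=
    Filter.Eventually.of_forall fun y => by positivity
  have hmeas : AEStronglyMeasurable
      (fun y : EuclideanSpace ℝ (Fin 2) =>
        (1 / (Real.pi * ‖x - y‖)) * (1 / (Real.pi * Real.sqrt (1 - ‖y‖ ^ 2))))
      (volume.restrict (Metric.ball (0 : EuclideanSpace ℝ (Fin 2)) 1)) := by
    apply Measurable.aestronglyMeasurable
    apply Measurable.mul
    · exact measurable_const.div (measurable_const.mul ((measurable_const.sub measurable_id).norm))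
    · exact measurable_const.div (measurable_const.mul
        (Real.continuous_sqrt.measurable.comp (measurable_const.sub (measurable_norm.pow_const 2))))
  rw [integral_eq_lintegral_of_nonneg_ae hnn hmeas]
  set e : EuclideanSpace ℝ (Fin 2) ≃ₗᵢ[ℝ] ℂ := Complex.orthonormalBasisOneI.repr.symm with he
  have hmp : MeasurePreserving (⇑e) volume volume :=
    Complex.orthonormalBasisOneI.measurePreserving_repr_symm
  have hemb : MeasurableEmbedding (⇑e) := e.toMeasurableEquiv.measurableEmbedding
  have hpre : (⇑e)⁻¹' (Metric.ball (0:ℂ) 1) = Metric.ball (0 : EuclideanSpace ℝ (Fin 2)) 1 := by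
    ext y
    simp only [mem_preimage, Metric.mem_ball, dist_zero_right, e.norm_map]
  have hxc : ‖e x‖ < 1 := by rw [e.norm_map]; exact hx
  have key := Stmt4Aux.complex_key (e x) hxc
  have htrans := hmp.setLIntegral_comp_preimage_emb hemb
    (fun z => ENNReal.ofReal ((1 / (π * ‖e x - z‖)) * (1 / (π * Real.sqrt (1 - ‖z‖^2)))))
    (Metric.ball 0 1)
  rw [hpre] at htrans
  have hcongr : ∀ y : EuclideanSpace ℝ (Fin 2),
      ENNReal.ofReal ((1 / (π * ‖e x - e y‖)) * (1 / (π * Real.sqrt (1 - ‖e y‖^2))))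
        = ENNReal.ofReal ((1 / (π * ‖x - y‖)) * (1 / (π * Real.sqrt (1 - ‖y‖^2)))) := by
    intro y
    rw [← map_sub e x y, e.norm_map, e.norm_map]
  rw [show (fun y : EuclideanSpace ℝ (Fin 2) =>
      ENNReal.ofReal ((1 / (π * ‖e x - e y‖)) * (1 / (π * Real.sqrt (1 - ‖e y‖^2)))))
      = fun y => ENNReal.ofReal ((1 / (π * ‖x - y‖)) * (1 / (π * Real.sqrt (1 - ‖y‖^2))))
    from funext hcongr] at htrans
  rw [htrans, key]
  simp
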